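/- For |a| < 1, |q| < 1, and variables z_1,…,z_n, the identity (a;q)_∞^n ∏_{1≤i<j≤n}(a z_i z_j;q)_∞(a z_i/z_j;q)_∞(a z_j/z_i;q)_∞(a/(z_i z_j);q)_∞ divided by the same product with a replaced by ta equals exp[∑_{k ≥ 1} (P_k² − P_{2k}) a^k (t^k − 1)/(2k(1 − q^k))], where P_k = ∑_i (z_i^k + z_i^{−k}). -/

import Mathlib

/-- The infinite q-Pochhammer symbol `(a;b)_∞ = ∏_{k ≥ 0} (1 - a b^k)`. -/
noncomputable def qPoch (a b : ℂ) : ℂ := ∏' k : ℕ, (1 - a * b ^ k)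

/-- The cross-term product
`(a;q)^n ∏_{i<j} (a z_i^{±1} z_j^{±1};q)` (product over all four signs). -/
noncomputable def crossProd (n : ℕ) (a q : ℂ) (z : Fin n → ℂ) : ℂ :=
  qPoch a q ^ n *
    ∏ i, ∏ j,
      if i < j then
        qPoch (a * z i * z j) q * qPoch (a * z i / z j) q *
          qPoch (a * z j / z i) q * qPoch (a / (z i * z j)) q
      else 1




open Complex

noncomputable def ell (q x : ℂ) (k : ℕ) : ℂ :=
  x ^ (k + 1) / (((k : ℂ) + 1) * (1 - q ^ (k + 1)))

lemma norm_q_pow_le_one {q : ℂ} (hq : ‖q‖ < 1) (j : ℕ) : ‖q ^ j‖ ≤ 1 := by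
  rw [norm_pow]; exact pow_le_one₀ (norm_nonneg _) hq.le

lemma norm_one_sub_q_pow {q : ℂ} (hq : ‖q‖ < 1) (k : ℕ) :
    1 - ‖q‖ ≤ ‖1 - q ^ (k + 1)‖ := by
  have h1 : ‖q ^ (k + 1)‖ ≤ ‖q‖ := by
    rw [norm_pow]
    exact pow_le_of_le_one (norm_nonneg _) hq.le (Nat.succ_ne_zero k)
  calc 1 - ‖q‖ ≤ ‖(1 : ℂ)‖ - ‖q ^ (k + 1)‖ := by rw [norm_one]; linarith
    _ ≤ ‖1 - q ^ (k + 1)‖ := norm_sub_norm_le _ _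

lemma one_sub_q_pow_ne {q : ℂ} (hq : ‖q‖ < 1) (k : ℕ) : (1 : ℂ) - q ^ (k + 1) ≠ 0 := by
  intro h
  have := norm_one_sub_q_pow hq k
  rw [h, norm_zero] at this; linarith

lemma norm_k_add_one (k : ℕ) : (1 : ℝ) ≤ ‖((k : ℂ) + 1)‖ := by
  have : ((k : ℂ) + 1) = ((k + 1 : ℕ) : ℂ) := by push_cast; ring
  rw [this, Complex.norm_natCast]
  exact_mod_cast Nat.one_le_iff_ne_zero.2 (Nat.succ_ne_zero k)

lemma norm_ell_le {q x : ℂ} (hq : ‖q‖ < 1) (k : ℕ) :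
    ‖ell q x k‖ ≤ (1 - ‖q‖)⁻¹ * ‖x‖ ^ (k + 1) := by
  have hq0 : (0 : ℝ) < 1 - ‖q‖ := by linarith
  have hd : 1 - ‖q‖ ≤ ‖((k : ℂ) + 1) * (1 - q ^ (k + 1))‖ := by
    rw [norm_mul]
    calc 1 - ‖q‖ = 1 * (1 - ‖q‖) := (one_mul _).symm
      _ ≤ ‖((k : ℂ) + 1)‖ * ‖1 - q ^ (k + 1)‖ :=
          mul_le_mul (norm_k_add_one k) (norm_one_sub_q_pow hq k) hq0.le
            (le_trans zero_le_one (norm_k_add_one k))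
  rw [ell, norm_div, norm_pow, div_le_iff₀ (lt_of_lt_of_le hq0 hd)]
  calc ‖x‖ ^ (k + 1) = (1 - ‖q‖)⁻¹ * ‖x‖ ^ (k + 1) * (1 - ‖q‖) := by
        rw [mul_comm ((1 - ‖q‖)⁻¹) _, mul_assoc, inv_mul_cancel₀ hq0.ne', mul_one]
    _ ≤ _ := by
        apply mul_le_mul_of_nonneg_left hd
        positivity

lemma summable_ell {q x : ℂ} (hq : ‖q‖ < 1) (hx : ‖x‖ < 1) : Summable (ell q x) := by
  have hg : Summable (fun k : ℕ => (1 - ‖q‖)⁻¹ * ‖x‖ ^ (k + 1)) := by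
    apply Summable.mul_left
    simpa [pow_succ] using (summable_geometric_of_lt_one (norm_nonneg x) hx).mul_right ‖x‖
  exact Summable.of_norm_bounded hg (norm_ell_le hq)

lemma qPoch_eq_exp {x q : ℂ} (hx : ‖x‖ < 1) (hq : ‖q‖ < 1) :
    qPoch x q = Complex.exp (-∑' k : ℕ, ell q x k) := by
  set f : ℕ × ℕ → ℂ := fun p => (x * q ^ p.1) ^ (p.2 + 1) / ((p.2 : ℂ) + 1) with hf
  have hqj : ∀ j : ℕ, ‖x * q ^ j‖ < 1 := by
    intro j
    calc ‖x * q ^ j‖ = ‖x‖ * ‖q ^ j‖ := norm_mul _ _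
      _ ≤ ‖x‖ * 1 := mul_le_mul_of_nonneg_left (norm_q_pow_le_one hq j) (norm_nonneg _)
      _ < 1 := by rwa [mul_one]
  have hne : ∀ j : ℕ, (1 : ℂ) - x * q ^ j ≠ 0 := by
    intro j h
    have h2 := hqj j
    have : (1:ℝ) ≤ ‖x * q ^ j‖ := by
      have : x * q ^ j = 1 := by linear_combination -h
      rw [this, norm_one]
    linarith
  have hsum_f : Summable f := by
    have hg : Summable (fun p : ℕ × ℕ => ‖q‖ ^ p.1 * ‖x‖ ^ (p.2 + 1)) := by
      have h1 : Summable (fun j : ℕ => ‖q‖ ^ j) := summable_geometric_of_lt_one (norm_nonneg q) hq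
      have h2 : Summable (fun m : ℕ => ‖x‖ ^ (m + 1)) := by
        simpa [pow_succ] using (summable_geometric_of_lt_one (norm_nonneg x) hx).mul_right ‖x‖
      exact Summable.mul_of_nonneg (f := fun j : ℕ => ‖q‖ ^ j) (g := fun m : ℕ => ‖x‖ ^ (m + 1))
        h1 h2 (fun j => by positivity) (fun m => by positivity)
    refine Summable.of_norm_bounded hg fun p => ?_
    obtain ⟨j, m⟩ := p
    have h1 : (‖q‖ ^ j) ^ (m + 1) ≤ ‖q‖ ^ j :=
      pow_le_of_le_one (by positivity) (pow_le_one₀ (norm_nonneg _) hq.le) (Nat.succ_ne_zero m)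
    have hk1 := norm_k_add_one m
    simp only [hf, norm_div, norm_pow, norm_mul]
    rw [div_le_iff₀ (lt_of_lt_of_le one_pos hk1)]
    calc (‖x‖ * ‖q‖ ^ j) ^ (m + 1) = ‖x‖ ^ (m + 1) * (‖q‖ ^ j) ^ (m + 1) := mul_pow _ _ _
      _ ≤ ‖x‖ ^ (m + 1) * ‖q‖ ^ j := mul_le_mul_of_nonneg_left h1 (by positivity)
      _ = ‖q‖ ^ j * ‖x‖ ^ (m + 1) * 1 := by ring
      _ ≤ ‖q‖ ^ j * ‖x‖ ^ (m + 1) * ‖((m : ℂ) + 1)‖ := by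
          apply mul_le_mul_of_nonneg_left hk1 (by positivity)
  -- row sums: for fixed j
  have hrow : ∀ j : ℕ, HasSum (fun m => f (j, m)) (-Complex.log (1 - x * q ^ j)) := by
    intro j
    have h0 := Complex.hasSum_taylorSeries_neg_log (hqj j)
    have h1 : HasSum (fun m : ℕ => (x * q ^ j) ^ (m + 1) / ((m + 1 : ℕ) : ℂ))
        (-Complex.log (1 - x * q ^ j)) := by
      refine (hasSum_nat_add_iff (f := fun n : ℕ => (x * q ^ j) ^ n / (n : ℂ)) 1).2 ?_
      simpa using h0
    refine h1.congr_fun fun m => ?_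
    simp only [hf]; push_cast; ring_nf
  -- sum over j of the logs
  have hS : HasSum (fun j => -Complex.log (1 - x * q ^ j)) (∑' p, f p) :=
    hsum_f.hasSum.prod_fiberwise hrow
  have hprod : HasProd (fun j => 1 - x * q ^ j) (Complex.exp (-∑' p, f p)) := by
    have h := hS.neg.cexp
    simp only [Function.comp, neg_neg] at h
    have hfe : (fun j : ℕ => 1 - x * q ^ j) = fun j => Complex.exp (Complex.log (1 - x * q ^ j)) :=
      funext fun j => (Complex.exp_log (hne j)).symm
    rw [hfe]
    exact h
  rw [qPoch, hprod.tprod_eq]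
  congr 1
  -- ∑' p, f p = ∑' k, ell q x k
  have hswap : Summable (fun p : ℕ × ℕ => f p.swap) :=
    ((Equiv.prodComm ℕ ℕ).summable_iff).2 hsum_f
  have hcol : ∀ m : ℕ, HasSum (fun j => f (j, m)) (ell q x m) := by
    intro m
    have hqm : ‖q ^ (m + 1)‖ < 1 := by
      rw [norm_pow]; exact pow_lt_one₀ (norm_nonneg _) hq (Nat.succ_ne_zero m)
    have hgeo := (hasSum_geometric_of_norm_lt_one hqm).mul_left (x ^ (m + 1) / ((m : ℂ) + 1))
    have hm0 : ((m : ℂ) + 1) ≠ 0 := by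
      have := Nat.cast_add_one_ne_zero (R := ℂ) m
      push_cast at this ⊢; exact this
    have hval : x ^ (m + 1) / ((m : ℂ) + 1) * (1 - q ^ (m + 1))⁻¹ = ell q x m := by
      rw [ell]
      field_simp
    rw [← hval]
    refine hgeo.congr_fun fun j => ?_
    simp only [hf]
    rw [mul_pow, ← pow_mul, ← pow_mul, Nat.mul_comm j (m + 1)]
    ring
  have h2 : HasSum (fun m => ell q x m) (∑' p : ℕ × ℕ, f p.swap) :=
    hswap.hasSum.prod_fiberwise fun m => hcol m
  rw [h2.tsum_eq, ← (Equiv.prodComm ℕ ℕ).tsum_eq f]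
  simp [Equiv.coe_prodComm]

lemma sq_sum_split {n : ℕ} (s : Fin n → ℂ) :
    (∑ i, s i) ^ 2 = ∑ i, (s i) ^ 2 + 2 * ∑ i, ∑ j, (if i < j then s i * s j else 0) := by
  have h1 : (∑ i, s i) ^ 2 = ∑ i, ∑ j, s i * s j := by
    rw [sq, Finset.sum_mul_sum]
  have h2 : ∀ i j : Fin n, s i * s j =
      (if i = j then s i * s j else 0) + (if i < j then s i * s j else 0) +
        (if j < i then s i * s j else 0) := by
    intro i j
    rcases lt_trichotomy i j with h | h | h
    · simp [h, h.ne, not_lt_of_gt h]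
    · simp [h, lt_irrefl]
    · simp [h, (h.ne).symm, not_lt_of_gt h, h.ne]
  rw [h1]
  have h3 : ∑ i, ∑ j, s i * s j =
      ∑ i, ∑ j, ((if i = j then s i * s j else 0) + (if i < j then s i * s j else 0) +
        (if j < i then s i * s j else 0)) := by
    refine Finset.sum_congr rfl fun i _ => Finset.sum_congr rfl fun j _ => h2 i j
  rw [h3]
  simp only [Finset.sum_add_distrib]
  have h4 : ∑ i : Fin n, ∑ j : Fin n, (if i = j then s i * s j else 0) = ∑ i, (s i) ^ 2 := by
    refine Finset.sum_congr rfl fun i _ => ?_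
    rw [Finset.sum_ite_eq (Finset.univ : Finset (Fin n)) i (fun j => s i * s j)]
    simp [sq]
  have h5 : ∑ i : Fin n, ∑ j : Fin n, (if j < i then s i * s j else 0)
      = ∑ i : Fin n, ∑ j : Fin n, (if i < j then s i * s j else 0) := by
    rw [Finset.sum_comm]
    refine Finset.sum_congr rfl fun i _ => Finset.sum_congr rfl fun j _ => ?_
    rcases lt_or_ge i j with h | h
    · simp [h, mul_comm]
    · simp [not_lt_of_ge h]
  rw [h4, h5]; ring

lemma key_alg {n : ℕ} (w : Fin n → ℂ) (hw : ∀ i, w i ≠ 0) :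
    (n : ℂ) + ∑ i, ∑ j, (if i < j then w i * w j + w i / w j + w j / w i + 1 / (w i * w j) else 0)
      = ((∑ i, (w i + (w i)⁻¹)) ^ 2 - ∑ i, ((w i) ^ 2 + ((w i)⁻¹) ^ 2)) / 2 := by
  set s : Fin n → ℂ := fun i => w i + (w i)⁻¹ with hs
  have hterm : ∀ i j : Fin n,
      (if i < j then w i * w j + w i / w j + w j / w i + 1 / (w i * w j) else 0)
        = (if i < j then s i * s j else 0) := by
    intro i j
    by_cases h : i < j
    · simp only [h, if_true, hs]
      field_simp
      ring
    · simp [h]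
  have hsq : ∀ i, (s i) ^ 2 = w i ^ 2 + ((w i)⁻¹) ^ 2 + 2 := by
    intro i
    have h := hw i
    simp only [hs]
    field_simp
    ring
  simp only [hterm]
  rw [sq_sum_split s]
  have h6 : ∑ i, (s i) ^ 2 = ∑ i, (w i ^ 2 + ((w i)⁻¹) ^ 2) + 2 * (n : ℂ) := by
    simp only [hsq]
    rw [Finset.sum_add_distrib, Finset.sum_const, Finset.card_univ, Fintype.card_fin]
    ring
  rw [h6]; ring


noncomputable def Gterm (n : ℕ) (x q : ℂ) (z : Fin n → ℂ) (k : ℕ) : ℂ :=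
  (n : ℂ) * ell q x k + ∑ i, ∑ j,
    (if i < j then
      ell q (x * z i * z j) k + ell q (x * z i / z j) k + ell q (x * z j / z i) k +
        ell q (x / (z i * z j)) k
    else 0)

lemma summable_ite_four {n : ℕ} {x q : ℂ} {z : Fin n → ℂ} (hq : ‖q‖ < 1)
    (hs : ∀ i j, ‖x * z i * z j‖ < 1 ∧ ‖x * z i / z j‖ < 1 ∧ ‖x / (z i * z j)‖ < 1)
    (i j : Fin n) :
    Summable (fun k => if i < j then
      ell q (x * z i * z j) k + ell q (x * z i / z j) k + ell q (x * z j / z i) k +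
        ell q (x / (z i * z j)) k else 0) := by
  by_cases h : i < j
  · simp only [h, if_true]
    exact (((summable_ell hq (hs i j).1).add (summable_ell hq (hs i j).2.1)).add
      (summable_ell hq (hs j i).2.1)).add (summable_ell hq (hs i j).2.2)
  · simp only [h, if_false]; exact summable_zero

lemma summable_Gterm {n : ℕ} {x q : ℂ} {z : Fin n → ℂ} (hq : ‖q‖ < 1) (hx : ‖x‖ < 1)
    (hs : ∀ i j, ‖x * z i * z j‖ < 1 ∧ ‖x * z i / z j‖ < 1 ∧ ‖x / (z i * z j)‖ < 1) :
    Summable (Gterm n x q z) := by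
  exact ((summable_ell hq hx).mul_left _).add
    (summable_sum fun i _ => summable_sum fun j _ => summable_ite_four hq hs i j)

lemma crossProd_eq_exp (n : ℕ) (x q : ℂ) (z : Fin n → ℂ) (hq : ‖q‖ < 1) (hx : ‖x‖ < 1)
    (hs : ∀ i j, ‖x * z i * z j‖ < 1 ∧ ‖x * z i / z j‖ < 1 ∧ ‖x / (z i * z j)‖ < 1) :
    crossProd n x q z = Complex.exp (-∑' k, Gterm n x q z k) := by
  have hfac : ∀ i j : Fin n,
      (if i < j then qPoch (x * z i * z j) q * qPoch (x * z i / z j) q *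
          qPoch (x * z j / z i) q * qPoch (x / (z i * z j)) q else 1)
        = Complex.exp (if i < j then
            -∑' k, ell q (x * z i * z j) k + -∑' k, ell q (x * z i / z j) k +
              -∑' k, ell q (x * z j / z i) k + -∑' k, ell q (x / (z i * z j)) k
          else 0) := by
    intro i j
    by_cases h : i < j
    · simp only [h, if_true]
      rw [qPoch_eq_exp (hs i j).1 hq, qPoch_eq_exp (hs i j).2.1 hq,
        qPoch_eq_exp (hs j i).2.1 hq, qPoch_eq_exp (hs i j).2.2 hq,
        ← Complex.exp_add, ← Complex.exp_add, ← Complex.exp_add]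
    · simp [h]
  rw [crossProd, qPoch_eq_exp hx hq, ← Complex.exp_nat_mul]
  simp only [hfac]
  have h1 : (∏ i : Fin n, ∏ j : Fin n, Complex.exp (if i < j then
      -∑' k, ell q (x * z i * z j) k + -∑' k, ell q (x * z i / z j) k +
        -∑' k, ell q (x * z j / z i) k + -∑' k, ell q (x / (z i * z j)) k else 0))
      = Complex.exp (∑ i : Fin n, ∑ j : Fin n, (if i < j then
      -∑' k, ell q (x * z i * z j) k + -∑' k, ell q (x * z i / z j) k +
        -∑' k, ell q (x * z j / z i) k + -∑' k, ell q (x / (z i * z j)) k else 0)) := by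
    rw [Complex.exp_sum]
    exact Finset.prod_congr rfl fun i _ => by rw [Complex.exp_sum]
  rw [h1, ← Complex.exp_add]
  congr 1
  have hB : ∀ i j : Fin n, (if i < j then
      -∑' k, ell q (x * z i * z j) k + -∑' k, ell q (x * z i / z j) k +
        -∑' k, ell q (x * z j / z i) k + -∑' k, ell q (x / (z i * z j)) k else 0)
      = -∑' k, (if i < j then
          ell q (x * z i * z j) k + ell q (x * z i / z j) k + ell q (x * z j / z i) k +
            ell q (x / (z i * z j)) k else 0) := by
    intro i j
    by_cases h : i < j
    · simp only [h, if_true]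
      rw [Summable.tsum_add (((summable_ell hq (hs i j).1).add (summable_ell hq (hs i j).2.1)).add
            (summable_ell hq (hs j i).2.1)) (summable_ell hq (hs i j).2.2),
        Summable.tsum_add ((summable_ell hq (hs i j).1).add (summable_ell hq (hs i j).2.1))
          (summable_ell hq (hs j i).2.1),
        Summable.tsum_add (summable_ell hq (hs i j).1) (summable_ell hq (hs i j).2.1)]
      ring
    · simp [h]
  simp only [hB]
  have h2 : ∑ i : Fin n, ∑ j : Fin n, (-∑' k, (if i < j then
      ell q (x * z i * z j) k + ell q (x * z i / z j) k + ell q (x * z j / z i) k +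
        ell q (x / (z i * z j)) k else 0))
      = -∑ i : Fin n, ∑ j : Fin n, ∑' k, (if i < j then
          ell q (x * z i * z j) k + ell q (x * z i / z j) k + ell q (x * z j / z i) k +
            ell q (x / (z i * z j)) k else 0) := by
    rw [← Finset.sum_neg_distrib]
    refine Finset.sum_congr rfl fun i _ => ?_
    rw [← Finset.sum_neg_distrib]
  have h3 : ∑ i : Fin n, ∑ j : Fin n, ∑' k, (if i < j then
      ell q (x * z i * z j) k + ell q (x * z i / z j) k + ell q (x * z j / z i) k +
        ell q (x / (z i * z j)) k else 0)
      = ∑' k, ∑ i : Fin n, ∑ j : Fin n, (if i < j then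
          ell q (x * z i * z j) k + ell q (x * z i / z j) k + ell q (x * z j / z i) k +
            ell q (x / (z i * z j)) k else 0) := by
    rw [Summable.tsum_finsetSum (fun i _ => summable_sum fun j _ => summable_ite_four hq hs i j)]
    refine Finset.sum_congr rfl fun i _ => ?_
    rw [Summable.tsum_finsetSum (fun j _ => summable_ite_four hq hs i j)]
  rw [h2, h3]
  rw [show ((n : ℂ) * -∑' k, ell q x k) = -((n : ℂ) * ∑' k, ell q x k) by ring, ← neg_add]
  congr 1
  rw [← tsum_mul_left,
    ← Summable.tsum_add ((summable_ell hq hx).mul_left _)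
      (summable_sum fun i _ => summable_sum fun j _ => summable_ite_four hq hs i j)]
  rfl

lemma Gterm_eq {n : ℕ} (x q : ℂ) (z : Fin n → ℂ) (hz : ∀ i, z i ≠ 0) (k : ℕ) :
    Gterm n x q z k =
      ((∑ i, (z i ^ (k + 1) + (z i)⁻¹ ^ (k + 1))) ^ 2 -
          (∑ i, (z i ^ (2 * (k + 1)) + (z i)⁻¹ ^ (2 * (k + 1))))) * x ^ (k + 1) /
        (2 * ((k : ℂ) + 1) * (1 - q ^ (k + 1))) := by
  set w : Fin n → ℂ := fun i => z i ^ (k + 1) with hwdef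
  have hw : ∀ i, w i ≠ 0 := fun i => pow_ne_zero _ (hz i)
  have h4 : ∀ i j : Fin n,
      (if i < j then
          ell q (x * z i * z j) k + ell q (x * z i / z j) k + ell q (x * z j / z i) k +
            ell q (x / (z i * z j)) k else 0)
        = (if i < j then w i * w j + w i / w j + w j / w i + 1 / (w i * w j) else 0)
            * ell q x k := by
    intro i j
    by_cases h : i < j
    · simp only [h, if_true, ell, hwdef]
      rw [div_pow, div_pow, div_pow, mul_pow, mul_pow, mul_pow]
      ring
    · simp [h]
  have hstep : Gterm n x q z k
      = ((n : ℂ) + ∑ i, ∑ j,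
          (if i < j then w i * w j + w i / w j + w j / w i + 1 / (w i * w j) else 0))
        * ell q x k := by
    rw [Gterm]
    simp only [h4, ← Finset.sum_mul]
    ring
  rw [hstep, key_alg w hw]
  have e1 : ∀ i, (z i)⁻¹ ^ (k + 1) = (w i)⁻¹ := fun i => inv_pow _ _
  have e2 : ∀ i, z i ^ (2 * (k + 1)) = (w i) ^ 2 := fun i => by
    rw [hwdef, ← pow_mul, Nat.mul_comm]
  have e3 : ∀ i, (z i)⁻¹ ^ (2 * (k + 1)) = ((w i)⁻¹) ^ 2 := fun i => by
    rw [inv_pow, inv_pow, e2 i]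
  simp only [e1, e2, e3]
  rw [ell, div_mul_div_comm, ← mul_assoc]

/-- The interaction factor lift:
`[(a;q)^n ∏_{i<j}(a z_i^{±1}z_j^{±1};q)] / [(ta;q)^n ∏_{i<j}(ta z_i^{±1}z_j^{±1};q)]
  = exp[∑_{k≥1} (P_k² − P_{2k}) a^k (t^k − 1)/(2k(1 − q^k))]`,
where `P_k = ∑_i (z_i^k + z_i^{−k})`. -/
theorem interaction_product_lift (n : ℕ) (a q t : ℂ) (ha : ‖a‖ < 1)
    (hta : ‖t * a‖ < 1) (hq : ‖q‖ < 1) (z : Fin n → ℂ) (hz : ∀ i, z i ≠ 0)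
    (hsmall : ∀ i j, ‖a * z i * z j‖ < 1 ∧ ‖a * z i / z j‖ < 1 ∧
      ‖a / (z i * z j)‖ < 1)
    (hsmall' : ∀ i j, ‖t * a * z i * z j‖ < 1 ∧ ‖t * a * z i / z j‖ < 1 ∧
      ‖t * a / (z i * z j)‖ < 1) :
    crossProd n a q z / crossProd n (t * a) q z =
      Complex.exp (∑' k : ℕ,
        ((∑ i, (z i ^ (k + 1) + (z i)⁻¹ ^ (k + 1))) ^ 2 -
            (∑ i, (z i ^ (2 * (k + 1)) + (z i)⁻¹ ^ (2 * (k + 1))))) *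
          a ^ (k + 1) * (t ^ (k + 1) - 1) /
          (2 * ((k : ℂ) + 1) * (1 - q ^ (k + 1)))) := by
  rw [crossProd_eq_exp n a q z hq ha hsmall, crossProd_eq_exp n (t * a) q z hq hta hsmall',
    ← Complex.exp_sub]
  congr 1
  rw [neg_sub_neg,
    ← Summable.tsum_sub (summable_Gterm hq hta hsmall') (summable_Gterm hq ha hsmall)]
  refine tsum_congr fun k => ?_
  rw [Gterm_eq (t * a) q z hz k, Gterm_eq a q z hz k]
  ring
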